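/- Let f : W × U → ℝ satisfy |f(α₁,u₁) − f(α₂,u₂)| ≤ L·max{‖α₁−α₂‖_∞, ‖u₁−u₂‖_∞} for all inputs, where W, U consist of L_W- and L_U-Lipschitz functions on compact cubes Ω_W, Ω_U. Let {aᵢ}₁^{n_W}, {c_m}₁^{n_U} be centers of δ_W- and δ_U-covers of Ω_W, Ω_U with subordinate partitions of unity {ρᵢ}, {ω_m}, and define the lifted surrogate f̂(z,w) = f(Σᵢ zᵢρᵢ, Σ_m w_m ω_m). Then: (a) |f(α,u) − f̂(P_W(α), P_U(u))| ≤ L·max{L_W δ_W, L_U δ_U} for all (α,u), where P_W(α) = (α(a₁),…,α(a_{n_W})) and P_U(u) = (u(c₁),…,u(c_{n_U})); and (b) f̂ is L-Lipschitz on ℝ^{n_W} × ℝ^{n_U} with respect to the ℓ² norm of the concatenated vector. -/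
import Mathlib

private lemma aux_recon {X : Type*} [PseudoMetricSpace X] {Ω : Set X} {n : ℕ}
    {a : Fin n → X} {ρ : Fin n → X → ℝ} {K δ : ℝ} (hK : 0 ≤ K) (hδ : 0 ≤ δ)
    (hρ01 : ∀ i, ∀ x ∈ Ω, ρ i x ∈ Set.Icc (0:ℝ) 1)
    (hρsum : ∀ x ∈ Ω, ∑ i, ρ i x = 1)
    (hρsupp : ∀ i, ∀ x ∈ Ω, δ < dist x (a i) → ρ i x = 0)
    {α : X → ℝ} (hα : LipschitzOnWith (Real.toNNReal K) α Ω)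
    (ha : ∀ i, a i ∈ Ω) {x : X} (hx : x ∈ Ω) :
    |α x - ∑ i, α (a i) * ρ i x| ≤ K * δ := by
  have h1 : α x - ∑ i, α (a i) * ρ i x = ∑ i, (α x - α (a i)) * ρ i x := by
    simp only [sub_mul, Finset.sum_sub_distrib, ← Finset.mul_sum, hρsum x hx, mul_one]
  rw [h1]
  calc |∑ i, (α x - α (a i)) * ρ i x| ≤ ∑ i, |(α x - α (a i)) * ρ i x| :=
        Finset.abs_sum_le_sum_abs _ _
    _ ≤ ∑ i, (K * δ) * ρ i x := by
        apply Finset.sum_le_sum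
        intro i _
        rcases le_or_gt (dist x (a i)) δ with h | h
        · rw [abs_mul, abs_of_nonneg (hρ01 i x hx).1]
          apply mul_le_mul_of_nonneg_right _ (hρ01 i x hx).1
          have hlip := (lipschitzOnWith_iff_dist_le_mul.mp hα) x hx (a i) (ha i)
          rw [Real.dist_eq] at hlip
          calc |α x - α (a i)| ≤ (Real.toNNReal K : ℝ) * dist x (a i) := hlip
            _ ≤ K * δ := by
                rw [Real.coe_toNNReal _ hK]
                exact mul_le_mul_of_nonneg_left h hK
        · rw [hρsupp i x hx h, mul_zero, abs_zero]
          positivity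
    _ = K * δ := by rw [← Finset.mul_sum, hρsum x hx, mul_one]

private lemma aux_l2 {X : Type*} {Ω : Set X} {n : ℕ}
    {ρ : Fin n → X → ℝ}
    (hρ01 : ∀ i, ∀ x ∈ Ω, ρ i x ∈ Set.Icc (0:ℝ) 1)
    (hρsum : ∀ x ∈ Ω, ∑ i, ρ i x = 1)
    (d : Fin n → ℝ) {x : X} (hx : x ∈ Ω) :
    |∑ i, d i * ρ i x| ≤ Real.sqrt (∑ i, d i ^ 2) := by
  have h0 : |∑ i, d i * ρ i x| ≤ ∑ i, |d i| * ρ i x := by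
    refine (Finset.abs_sum_le_sum_abs _ _).trans (le_of_eq ?_)
    refine Finset.sum_congr rfl fun i _ => ?_
    rw [abs_mul, abs_of_nonneg (hρ01 i x hx).1]
  refine h0.trans ?_
  have hnn : 0 ≤ ∑ i, |d i| * ρ i x :=
    Finset.sum_nonneg fun i _ => mul_nonneg (abs_nonneg _) (hρ01 i x hx).1
  rw [← Real.sqrt_sq hnn]
  apply Real.sqrt_le_sqrt
  calc (∑ i, |d i| * ρ i x) ^ 2 ≤ (∑ i, |d i| ^ 2) * ∑ i, ρ i x ^ 2 :=
        Finset.sum_mul_sq_le_sq_mul_sq _ _ _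
    _ ≤ (∑ i, d i ^ 2) * 1 := by
        apply mul_le_mul
        · exact le_of_eq (Finset.sum_congr rfl fun i _ => sq_abs _)
        · rw [← hρsum x hx]
          apply Finset.sum_le_sum
          intro i _
          have h := hρ01 i x hx
          nlinarith [h.1, h.2]
        · exact Finset.sum_nonneg fun i _ => sq_nonneg _
        · exact Finset.sum_nonneg fun i _ => sq_nonneg _
    _ = ∑ i, d i ^ 2 := mul_one _

/-- Finite-dimensional surrogate of a functional on a product of Lipschitz
classes: (a) the surrogate built from point samples on δ-covers reproduces `f`
up to `L·max{L_W δ_W, L_U δ_U}`, and (b) it is `L`-Lipschitz with respect to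
the `ℓ²` norm of the concatenated sample vectors. -/
theorem stmt18 {dW dU : ℕ}
    (ΩW : Set (EuclideanSpace ℝ (Fin dW))) (ΩU : Set (EuclideanSpace ℝ (Fin dU)))
    (L LW LU δW δU : ℝ) (hL : 0 ≤ L) (hLW : 0 ≤ LW) (hLU : 0 ≤ LU)
    (hδW : 0 ≤ δW) (hδU : 0 ≤ δU)
    (f : (EuclideanSpace ℝ (Fin dW) → ℝ) → (EuclideanSpace ℝ (Fin dU) → ℝ) → ℝ)
    (hf : ∀ α₁ u₁ α₂ u₂, ∀ t : ℝ, 0 ≤ t →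
      (∀ x ∈ ΩW, |α₁ x - α₂ x| ≤ t) → (∀ x ∈ ΩU, |u₁ x - u₂ x| ≤ t) →
      |f α₁ u₁ - f α₂ u₂| ≤ L * t)
    (nW nU : ℕ)
    (a : Fin nW → EuclideanSpace ℝ (Fin dW)) (ha : ∀ i, a i ∈ ΩW)
    (c : Fin nU → EuclideanSpace ℝ (Fin dU)) (hc : ∀ m, c m ∈ ΩU)
    (ρ : Fin nW → EuclideanSpace ℝ (Fin dW) → ℝ)
    (ω : Fin nU → EuclideanSpace ℝ (Fin dU) → ℝ)
    (hρ01 : ∀ i, ∀ x ∈ ΩW, ρ i x ∈ Set.Icc (0 : ℝ) 1)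
    (hρsum : ∀ x ∈ ΩW, ∑ i, ρ i x = 1)
    (hρsupp : ∀ i, ∀ x ∈ ΩW, δW < dist x (a i) → ρ i x = 0)
    (hω01 : ∀ m, ∀ x ∈ ΩU, ω m x ∈ Set.Icc (0 : ℝ) 1)
    (hωsum : ∀ x ∈ ΩU, ∑ m, ω m x = 1)
    (hωsupp : ∀ m, ∀ x ∈ ΩU, δU < dist x (c m) → ω m x = 0) :
    (∀ (α : EuclideanSpace ℝ (Fin dW) → ℝ) (u : EuclideanSpace ℝ (Fin dU) → ℝ),
      LipschitzOnWith (Real.toNNReal LW) α ΩW →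
      LipschitzOnWith (Real.toNNReal LU) u ΩU →
      |f α u - f (fun x => ∑ i, α (a i) * ρ i x)
          (fun x => ∑ m, u (c m) * ω m x)|
        ≤ L * max (LW * δW) (LU * δU)) ∧
    ∀ (z₁ z₂ : Fin nW → ℝ) (w₁ w₂ : Fin nU → ℝ),
      |f (fun x => ∑ i, z₁ i * ρ i x) (fun x => ∑ m, w₁ m * ω m x)
        - f (fun x => ∑ i, z₂ i * ρ i x) (fun x => ∑ m, w₂ m * ω m x)|
      ≤ L * Real.sqrt ((∑ i, (z₁ i - z₂ i) ^ 2) + ∑ m, (w₁ m - w₂ m) ^ 2) := by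
  constructor
  · intro α u hα hu
    apply hf _ _ _ _ _ (le_max_of_le_left (mul_nonneg hLW hδW))
    · intro x hx
      exact le_trans (aux_recon hLW hδW hρ01 hρsum hρsupp hα ha hx) (le_max_left _ _)
    · intro x hx
      exact le_trans (aux_recon hLU hδU hω01 hωsum hωsupp hu hc hx) (le_max_right _ _)
  · intro z₁ z₂ w₁ w₂
    set A := ∑ i, (z₁ i - z₂ i) ^ 2 with hA
    set B := ∑ m, (w₁ m - w₂ m) ^ 2 with hB
    have hAnn : 0 ≤ A := Finset.sum_nonneg fun i _ => sq_nonneg _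
    have hBnn : 0 ≤ B := Finset.sum_nonneg fun i _ => sq_nonneg _
    apply hf _ _ _ _ _ (Real.sqrt_nonneg _)
    · intro x hx
      have h1 : (∑ i, z₁ i * ρ i x) - (∑ i, z₂ i * ρ i x)
          = ∑ i, (z₁ i - z₂ i) * ρ i x := by
        rw [← Finset.sum_sub_distrib]
        exact Finset.sum_congr rfl fun i _ => by ring
      simp only [h1]
      exact (aux_l2 hρ01 hρsum _ hx).trans
        (Real.sqrt_le_sqrt (by linarith))
    · intro x hx
      have h1 : (∑ m, w₁ m * ω m x) - (∑ m, w₂ m * ω m x)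
          = ∑ m, (w₁ m - w₂ m) * ω m x := by
        rw [← Finset.sum_sub_distrib]
        exact Finset.sum_congr rfl fun i _ => by ring
      simp only [h1]
      exact (aux_l2 hω01 hωsum _ hx).trans
        (Real.sqrt_le_sqrt (by linarith))
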